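/- Let X and F be r×r real matrices with r ≥ 1, X invertible and F non-nilpotent, and let ρ(F) be the spectral radius of F. Then lim sup_{n→∞} ( log‖X·F^n‖₁ − n·log ρ(F) ) / log n = s(F), where ‖N‖₁ denotes the sum of the absolute values of all entries of a matrix N, and s(F) is the polynomial growth rate of F, namely k − 1 where k is the maximum, over all complex eigenvalues λ of F with |λ| = ρ(F), of the least positive integer j such that ker((F − λ·I)^j) = ker((F − λ·I)^{j+1}) (kernels taken for F regarded as a complex matrix). -/

import Mathlib

open Filter Polynomial Matrix Finset

namespace SpecAux



variable {r : ℕ}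

lemma norm_mulVec_le (M : Matrix (Fin r) (Fin r) ℂ) (v : Fin r → ℂ) :
    ‖M.mulVec v‖ ≤ (∑ i, ∑ j, ‖M i j‖) * ‖v‖ := by
  have hnn : (0:ℝ) ≤ (∑ i, ∑ j, ‖M i j‖) * ‖v‖ := by positivity
  refine (pi_norm_le_iff_of_nonneg hnn).2 fun i => ?_
  have h1 : ‖M.mulVec v i‖ ≤ ∑ j, ‖M i j‖ * ‖v‖ := by
    rw [Matrix.mulVec, dotProduct]
    refine (norm_sum_le _ _).trans (Finset.sum_le_sum fun j _ => ?_)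
    rw [norm_mul]
    exact mul_le_mul_of_nonneg_left (norm_le_pi_norm v j) (norm_nonneg _)
  refine h1.trans ?_
  rw [← Finset.sum_mul]
  refine mul_le_mul_of_nonneg_right ?_ (norm_nonneg v)
  exact Finset.single_le_sum (f := fun i => ∑ j, ‖M i j‖)
    (fun i _ => Finset.sum_nonneg fun j _ => norm_nonneg _) (Finset.mem_univ i)

lemma mulVecLin_pow (M : Matrix (Fin r) (Fin r) ℂ) (i : ℕ) :
    (M ^ i).mulVecLin = M.mulVecLin ^ i := by
  induction i with
  | zero => simp [Matrix.mulVecLin_one]; rfl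
  | succ n ih => rw [pow_succ, pow_succ, Matrix.mulVecLin_mul, ih]; rfl

lemma ker_pow_mono (f : Module.End ℂ (Fin r → ℂ)) {i j : ℕ} (h : i ≤ j) :
    LinearMap.ker (f ^ i) ≤ LinearMap.ker (f ^ j) := by
  intro v hv
  rw [LinearMap.mem_ker] at hv ⊢
  have : f ^ j = f ^ (j - i) * f ^ i := by rw [← pow_add]; congr 1; omega
  rw [this, Module.End.mul_apply, hv, map_zero]

lemma isRoot_charpoly_iff (A : Matrix (Fin r) (Fin r) ℂ) (μ : ℂ) :
    A.charpoly.IsRoot μ ↔ ∃ v, v ≠ 0 ∧ (A - μ • 1).mulVec v = 0 := by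
  have hsc : (Matrix.scalar (Fin r)) μ = μ • (1 : Matrix (Fin r) (Fin r) ℂ) := by
    simp [Matrix.scalar, Matrix.smul_one_eq_diagonal]
  have h1 : A.charpoly.eval μ = (-(A - μ • 1)).det := by
    rw [Matrix.charpoly, eval_det, matPolyEquiv_charmatrix]
    rw [neg_sub, eval_sub, eval_X, eval_C, hsc]
  have h2 : (-(A - μ • 1)).det = (-1) ^ Fintype.card (Fin r) * (A - μ • 1).det :=
    Matrix.det_neg _
  constructor
  · intro h
    have hdet : (A - μ • 1).det = 0 := by
      have h0 : (0:ℂ) = (-1) ^ Fintype.card (Fin r) * (A - μ • 1).det := by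
        rw [← h2, ← h1]; exact h.symm
      have := h0.symm
      rcases mul_eq_zero.1 this with h' | h'
      · exact absurd h' (pow_ne_zero _ (by norm_num))
      · exact h'
    exact Matrix.exists_mulVec_eq_zero_iff.mpr hdet
  · intro ⟨v, hv, hveq⟩
    have hdet := Matrix.exists_mulVec_eq_zero_iff.mp ⟨v, hv, hveq⟩
    rw [IsRoot, h1, h2, hdet, mul_zero]

lemma pow_apply_expansion {V : Type*} [AddCommGroup V] [Module ℂ V]
    (f : Module.End ℂ V) (μ : ℂ) (v : V) (t : ℕ)
    (hv : ((f - μ • 1) ^ t) v = 0) {n : ℕ} (hn : t ≤ n) :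
    (f ^ n) v = ∑ m ∈ Finset.range t,
      ((n.choose m : ℂ) * μ ^ (n - m)) • ((f - μ • 1) ^ m) v := by
  set B := f - μ • 1 with hB
  have hc : Commute B (μ • (1 : Module.End ℂ V)) := (Commute.one_right _).smul_right μ
  have hf : f = B + μ • 1 := by rw [hB, sub_add_cancel]
  have h1 : (f ^ n) v = ∑ m ∈ Finset.range (n+1),
      ((n.choose m : ℂ) * μ ^ (n - m)) • (B ^ m) v := by
    conv_lhs => rw [hf, hc.add_pow]
    rw [LinearMap.sum_apply]
    refine Finset.sum_congr rfl fun m _ => ?_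
    have : (μ • (1 : Module.End ℂ V)) ^ (n - m) = μ ^ (n - m) • 1 := by
      rw [_root_.smul_pow, one_pow]
    rw [Module.End.mul_apply, Module.End.mul_apply, this]
    simp only [LinearMap.smul_apply, Module.End.one_apply, _root_.map_smul,
      Module.End.natCast_apply, map_nsmul]
    rw [mul_comm, mul_smul, Nat.cast_smul_eq_nsmul, smul_comm]
  rw [h1]
  refine (Finset.sum_subset (Finset.range_subset_range.2 (by omega)) fun m _ hm => ?_).symm
  have hmt : t ≤ m := by simp only [Finset.mem_range, not_lt] at hm; omega
  have : (B ^ m) v = 0 := by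
    have : B ^ m = B ^ (m - t) * B ^ t := by rw [← pow_add]; congr 1; omega
    rw [this, Module.End.mul_apply, hv, map_zero]
  rw [this, smul_zero]




lemma nat_choose_le_pow (n m : ℕ) : n.choose m ≤ n ^ m :=
  calc n.choose m ≤ m.factorial * n.choose m := Nat.le_mul_of_pos_left _ m.factorial_pos
  _ = n.descFactorial m := (Nat.descFactorial_eq_factorial_mul_choose n m).symm
  _ ≤ n ^ m := Nat.descFactorial_le_pow n m

lemma choose_le_pow_real (n m : ℕ) : (n.choose m : ℝ) ≤ (n:ℝ) ^ m := by
  exact_mod_cast nat_choose_le_pow n m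


lemma upper_bound {r k : ℕ} (hk1 : 1 ≤ k) (A : Matrix (Fin r) (Fin r) ℂ) {ρ : ℝ} (hρ : 0 < ρ)
    (hroots : ∀ μ : ℂ, A.charpoly.IsRoot μ → ‖μ‖ ≤ ρ)
    (hcirc : ∀ μ : ℂ, A.charpoly.IsRoot μ → ‖μ‖ = ρ →
      LinearMap.ker ((A.mulVecLin - μ • 1) ^ k) =
        LinearMap.ker ((A.mulVecLin - μ • 1) ^ (k+1))) :
    ∃ C : ℝ, ∀ᶠ n : ℕ in atTop,
      (∑ i, ∑ j, ‖(A ^ n) i j‖) ≤ C * (n:ℝ) ^ (k-1) * ρ ^ n := by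
  classical
  set L : Module.End ℂ (Fin r → ℂ) := A.mulVecLin with hL
  have hBm : ∀ μ : ℂ, (A - μ • 1).mulVecLin = L - μ • 1 := by
    intro μ
    apply LinearMap.ext; intro v
    simp only [Matrix.mulVecLin_apply, Matrix.sub_mulVec, Matrix.smul_mulVec,
      Matrix.one_mulVec, LinearMap.sub_apply, LinearMap.smul_apply, Module.End.one_apply, hL]
  have hroot_of : ∀ (μ : ℂ) (v : Fin r → ℂ), v ∈ L.maxGenEigenspace μ → v ≠ 0 →
      A.charpoly.IsRoot μ := by
    intro μ v hv hv0
    obtain ⟨m, hm⟩ := (Module.End.mem_maxGenEigenspace _ _ _).1 hv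
    have hPex : ∃ t : ℕ, (((L - μ • 1) : Module.End ℂ (Fin r → ℂ)) ^ t) v = 0 := ⟨m, hm⟩
    have ht0 : ((L - μ • 1) ^ (Nat.find hPex)) v = 0 := Nat.find_spec hPex
    have ht0pos : 0 < Nat.find hPex := by
      rcases Nat.eq_zero_or_pos (Nat.find hPex) with h | h
      · exfalso; apply hv0; rw [h, pow_zero] at ht0; simpa using ht0
      · exact h
    have hw0 : ((L - μ • 1) ^ (Nat.find hPex - 1)) v ≠ 0 := Nat.find_min hPex (by omega)
    refine (isRoot_charpoly_iff A μ).2 ⟨((L - μ • 1) ^ (Nat.find hPex - 1)) v, hw0, ?_⟩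
    have : (A - μ • 1).mulVec (((L - μ • 1) ^ (Nat.find hPex - 1)) v)
        = ((L - μ • 1) ^ (Nat.find hPex)) v := by
      rw [← Matrix.mulVecLin_apply, hBm]
      rw [← Module.End.mul_apply, ← pow_succ']
      congr 2
      omega
    rw [this, ht0]
  have hcase_circ : ∀ (μ : ℂ), A.charpoly.IsRoot μ → ‖μ‖ = ρ →
      ∀ v ∈ L.maxGenEigenspace μ, ((L - μ • 1) ^ k) v = 0 := by
    intro μ hr1 hr2 v hv
    have hconst := Module.End.ker_pow_constant (hcirc μ hr1 hr2)
    have hv' : v ∈ LinearMap.ker ((L - μ • 1) ^ (Module.finrank ℂ (Fin r → ℂ))) := by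
      rw [← Module.End.genEigenspace_nat, ← Module.End.maxGenEigenspace_eq_genEigenspace_finrank]
      exact hv
    rcases le_or_gt (Module.finrank ℂ (Fin r → ℂ)) k with h | h
    · exact LinearMap.mem_ker.1 (ker_pow_mono _ h hv')
    · have heq : LinearMap.ker ((L - μ • 1) ^ (Module.finrank ℂ (Fin r → ℂ)))
          = LinearMap.ker ((L - μ • 1) ^ k) := by
        have h2 := hconst (Module.finrank ℂ (Fin r → ℂ) - k)
        rw [show k + (Module.finrank ℂ (Fin r → ℂ) - k) = Module.finrank ℂ (Fin r → ℂ)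
          by omega] at h2
        exact h2.symm
      rw [heq] at hv'
      exact hv'
  -- per-vector bound, via a submodule of "polynomially bounded" vectors
  have hvec : ∀ v : Fin r → ℂ, ∃ C : ℝ, ∀ᶠ n : ℕ in atTop,
      ‖(L ^ n) v‖ ≤ C * (n:ℝ) ^ (k-1) * ρ ^ n := by
    have hnn : ∀ n : ℕ, (0:ℝ) ≤ (n:ℝ) ^ (k-1) * ρ ^ n := by
      intro n; positivity
    let P : Submodule ℂ (Fin r → ℂ) :=
    { carrier := {v | ∃ C : ℝ, ∀ᶠ n : ℕ in atTop, ‖(L ^ n) v‖ ≤ C * (n:ℝ) ^ (k-1) * ρ ^ n}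
      zero_mem' := ⟨0, Eventually.of_forall fun n => by simp⟩
      add_mem' := by
        rintro a b ⟨Ca, hCa⟩ ⟨Cb, hCb⟩
        refine ⟨Ca + Cb, ?_⟩
        filter_upwards [hCa, hCb] with n h1 h2
        calc ‖(L ^ n) (a + b)‖ ≤ ‖(L ^ n) a‖ + ‖(L ^ n) b‖ := by
              rw [map_add]; exact norm_add_le _ _
        _ ≤ Ca * ((n:ℝ) ^ (k-1) * ρ ^ n) + Cb * ((n:ℝ) ^ (k-1) * ρ ^ n) := by
              rw [← mul_assoc, ← mul_assoc]; exact add_le_add h1 h2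
        _ = (Ca + Cb) * (n:ℝ) ^ (k-1) * ρ ^ n := by ring
      smul_mem' := by
        rintro c v ⟨C, hC⟩
        refine ⟨‖c‖ * C, ?_⟩
        filter_upwards [hC] with n h1
        rw [_root_.map_smul, norm_smul]
        calc ‖c‖ * ‖(L ^ n) v‖ ≤ ‖c‖ * (C * (n:ℝ) ^ (k-1) * ρ ^ n) :=
              mul_le_mul_of_nonneg_left h1 (norm_nonneg c)
        _ = ‖c‖ * C * (n:ℝ) ^ (k-1) * ρ ^ n := by ring }
    have hsub : ∀ μ : ℂ, L.maxGenEigenspace μ ≤ P := by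
      intro μ v hv
      by_cases hv0 : v = 0
      · rw [hv0]; exact P.zero_mem
      have hroot := hroot_of μ v hv hv0
      have hle := hroots μ hroot
      by_cases hμ0 : μ = 0
      · obtain ⟨m, hm⟩ := (Module.End.mem_maxGenEigenspace _ _ _).1 hv
        rw [hμ0] at hm
        simp only [zero_smul, sub_zero] at hm
        refine ⟨0, ?_⟩
        filter_upwards [eventually_ge_atTop m] with n hn
        have hz : (L ^ n) v = 0 := by
          have hsplit : L ^ n = L ^ (n - m) * L ^ m := by rw [← pow_add]; congr 1; omega
          rw [hsplit, Module.End.mul_apply, hm, map_zero]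
        rw [hz, norm_zero]
        have := hnn n
        nlinarith [hnn n]
      rcases eq_or_lt_of_le hle with heq | hlt
      · -- |μ| = ρ
        have hkv := hcase_circ μ hroot heq v hv
        refine ⟨∑ m ∈ Finset.range k, (ρ ^ m)⁻¹ * ‖((L - μ • 1) ^ m) v‖, ?_⟩
        filter_upwards [eventually_ge_atTop k, eventually_ge_atTop 1] with n hnk hn1
        rw [pow_apply_expansion L μ v k hkv hnk]
        have hstep : ∀ m ∈ Finset.range k,
            ‖((n.choose m : ℂ) * μ ^ (n - m)) • ((L - μ • 1) ^ m) v‖ ≤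
            ((ρ ^ m)⁻¹ * ‖((L - μ • 1) ^ m) v‖) * (n:ℝ) ^ (k-1) * ρ ^ n := by
          intro m hm
          rw [norm_smul, norm_mul, Complex.norm_natCast, norm_pow, heq]
          have h1 : (n.choose m : ℝ) ≤ (n:ℝ) ^ (k-1) := by
            refine (choose_le_pow_real n m).trans ?_
            refine pow_le_pow_right₀ (by exact_mod_cast hn1) ?_
            simp only [Finset.mem_range] at hm; omega
          have h2 : ρ ^ (n - m) = ρ ^ n * (ρ ^ m)⁻¹ := by
            refine pow_sub₀ ρ (ne_of_gt hρ) ?_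
            simp only [Finset.mem_range] at hm; omega
          rw [h2]
          have key : (n.choose m : ℝ) * (ρ ^ n * (ρ ^ m)⁻¹) * ‖((L - μ • 1) ^ m) v‖ ≤
              (n:ℝ) ^ (k-1) * (ρ ^ n * (ρ ^ m)⁻¹) * ‖((L - μ • 1) ^ m) v‖ := by
            refine mul_le_mul_of_nonneg_right (mul_le_mul_of_nonneg_right h1 (by positivity))
              (norm_nonneg _)
          calc (n.choose m : ℝ) * (ρ ^ n * (ρ ^ m)⁻¹) * ‖((L - μ • 1) ^ m) v‖ ≤
              (n:ℝ) ^ (k-1) * (ρ ^ n * (ρ ^ m)⁻¹) * ‖((L - μ • 1) ^ m) v‖ := key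
          _ = ((ρ ^ m)⁻¹ * ‖((L - μ • 1) ^ m) v‖) * (n:ℝ) ^ (k-1) * ρ ^ n := by ring
        calc ‖∑ m ∈ Finset.range k, ((n.choose m : ℂ) * μ ^ (n - m)) • ((L - μ • 1) ^ m) v‖
            ≤ ∑ m ∈ Finset.range k, ‖((n.choose m : ℂ) * μ ^ (n - m)) • ((L - μ • 1) ^ m) v‖ :=
              norm_sum_le _ _
        _ ≤ ∑ m ∈ Finset.range k,
              ((ρ ^ m)⁻¹ * ‖((L - μ • 1) ^ m) v‖) * (n:ℝ) ^ (k-1) * ρ ^ n :=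
              Finset.sum_le_sum hstep
        _ = (∑ m ∈ Finset.range k, (ρ ^ m)⁻¹ * ‖((L - μ • 1) ^ m) v‖) * (n:ℝ) ^ (k-1) * ρ ^ n := by
              rw [← Finset.sum_mul, ← Finset.sum_mul]
      · -- |μ| < ρ
        obtain ⟨m, hm⟩ := (Module.End.mem_maxGenEigenspace _ _ _).1 hv
        have hμn : (0:ℝ) < ‖μ‖ := norm_pos_iff.2 hμ0
        have hq1 : ‖μ‖ / ρ < 1 := (div_lt_one hρ).2 hlt
        have hq0 : (0:ℝ) ≤ ‖μ‖ / ρ := by positivity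
        have htend : Tendsto (fun n : ℕ => (n:ℝ) ^ m * (‖μ‖ / ρ) ^ n) atTop (nhds 0) :=
          (summable_pow_mul_geometric_of_norm_lt_one (R := ℝ) (r := ‖μ‖ / ρ) m
            (by rw [Real.norm_eq_abs, abs_of_nonneg hq0]; exact hq1)).tendsto_atTop_zero
        refine ⟨∑ j ∈ Finset.range m, (‖μ‖ ^ j)⁻¹ * ‖((L - μ • 1) ^ j) v‖, ?_⟩
        have hD0 : (0:ℝ) ≤ ∑ j ∈ Finset.range m, (‖μ‖ ^ j)⁻¹ * ‖((L - μ • 1) ^ j) v‖ :=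
          Finset.sum_nonneg fun j _ => by positivity
        filter_upwards [eventually_ge_atTop m, eventually_ge_atTop 1,
          htend.eventually_lt_const one_pos] with n hnm hn1 hlt1
        rw [pow_apply_expansion L μ v m hm hnm]
        have hstep : ∀ j ∈ Finset.range m,
            ‖((n.choose j : ℂ) * μ ^ (n - j)) • ((L - μ • 1) ^ j) v‖ ≤
            ((‖μ‖ ^ j)⁻¹ * ‖((L - μ • 1) ^ j) v‖) * ((n:ℝ) ^ m * ‖μ‖ ^ n) := by
          intro j hj
          rw [norm_smul, norm_mul, Complex.norm_natCast, norm_pow]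
          have h1 : (n.choose j : ℝ) ≤ (n:ℝ) ^ m := by
            refine (choose_le_pow_real n j).trans ?_
            refine pow_le_pow_right₀ (by exact_mod_cast hn1) ?_
            simp only [Finset.mem_range] at hj; omega
          have h2 : ‖μ‖ ^ (n - j) = ‖μ‖ ^ n * (‖μ‖ ^ j)⁻¹ := by
            refine pow_sub₀ _ (ne_of_gt hμn) ?_
            simp only [Finset.mem_range] at hj; omega
          rw [h2]
          have key : (n.choose j : ℝ) * (‖μ‖ ^ n * (‖μ‖ ^ j)⁻¹) * ‖((L - μ • 1) ^ j) v‖ ≤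
              (n:ℝ) ^ m * (‖μ‖ ^ n * (‖μ‖ ^ j)⁻¹) * ‖((L - μ • 1) ^ j) v‖ :=
            mul_le_mul_of_nonneg_right (mul_le_mul_of_nonneg_right h1 (by positivity))
              (norm_nonneg _)
          refine key.trans_eq (by ring)
        have hsum : ‖∑ j ∈ Finset.range m, ((n.choose j : ℂ) * μ ^ (n - j)) • ((L - μ • 1) ^ j) v‖
            ≤ (∑ j ∈ Finset.range m, (‖μ‖ ^ j)⁻¹ * ‖((L - μ • 1) ^ j) v‖) *
              ((n:ℝ) ^ m * ‖μ‖ ^ n) := by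
          refine (norm_sum_le _ _).trans ?_
          rw [Finset.sum_mul]
          exact Finset.sum_le_sum hstep
        refine hsum.trans ?_
        have hfac : (n:ℝ) ^ m * ‖μ‖ ^ n ≤ (n:ℝ) ^ (k-1) * ρ ^ n := by
          have he : ‖μ‖ ^ n = (‖μ‖ / ρ) ^ n * ρ ^ n := by
            rw [div_pow]; field_simp
          have h3 : (n:ℝ) ^ m * ‖μ‖ ^ n ≤ 1 * ρ ^ n := by
            rw [he, ← mul_assoc]
            exact mul_le_mul_of_nonneg_right hlt1.le (by positivity)
          refine h3.trans ?_
          have h4 : (1:ℝ) ≤ (n:ℝ) ^ (k-1) := one_le_pow₀ (by exact_mod_cast hn1)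
          exact mul_le_mul_of_nonneg_right h4 (by positivity)
        calc (∑ j ∈ Finset.range m, (‖μ‖ ^ j)⁻¹ * ‖((L - μ • 1) ^ j) v‖) *
              ((n:ℝ) ^ m * ‖μ‖ ^ n)
            ≤ (∑ j ∈ Finset.range m, (‖μ‖ ^ j)⁻¹ * ‖((L - μ • 1) ^ j) v‖) *
              ((n:ℝ) ^ (k-1) * ρ ^ n) := mul_le_mul_of_nonneg_left hfac hD0
        _ = (∑ j ∈ Finset.range m, (‖μ‖ ^ j)⁻¹ * ‖((L - μ • 1) ^ j) v‖) *
              (n:ℝ) ^ (k-1) * ρ ^ n := by ring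
    intro v
    have hmem : v ∈ (⊤ : Submodule ℂ (Fin r → ℂ)) := Submodule.mem_top
    rw [← Module.End.iSup_maxGenEigenspace_eq_top L] at hmem
    exact (iSup_le hsub : (⨆ μ, L.maxGenEigenspace μ) ≤ P) hmem
  choose C hC using fun j : Fin r => hvec (Pi.single j 1)
  refine ⟨(r:ℝ) * ∑ j, C j, ?_⟩
  filter_upwards [eventually_all.2 hC] with n hn
  have hentry : ∀ i j, ‖(A ^ n) i j‖ ≤ ‖(L ^ n) (Pi.single j 1)‖ := by
    intro i j
    have h1 : (L ^ n) (Pi.single j 1) = (A ^ n).mulVec (Pi.single j 1) := by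
      rw [← mulVecLin_pow, Matrix.mulVecLin_apply]
    rw [h1, Matrix.mulVec_single]
    simpa using norm_le_pi_norm ((A ^ n).col j) i
  calc ∑ i, ∑ j, ‖(A ^ n) i j‖
      ≤ ∑ _i : Fin r, ∑ j, ‖(L ^ n) (Pi.single j 1)‖ :=
        Finset.sum_le_sum fun i _ => Finset.sum_le_sum fun j _ => hentry i j
  _ = (r:ℝ) * ∑ j, ‖(L ^ n) (Pi.single j 1)‖ := by
        rw [Finset.sum_const, Finset.card_univ, Fintype.card_fin, nsmul_eq_mul]
  _ ≤ (r:ℝ) * ∑ j, C j * (n:ℝ) ^ (k-1) * ρ ^ n := by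
        refine mul_le_mul_of_nonneg_left (Finset.sum_le_sum fun j _ => hn j) (by positivity)
  _ = ((r:ℝ) * ∑ j, C j) * (n:ℝ) ^ (k-1) * ρ ^ n := by
        rw [← Finset.sum_mul, ← Finset.sum_mul]; ring

lemma choose_ge_pow_real (K n : ℕ) (hn : 2*K + 2 ≤ n) :
    (n:ℝ)^K / ((2:ℝ)^K * (K.factorial : ℝ)) ≤ (n.choose K : ℝ) := by
  have h1 : (((n + 1 - K : ℕ)) : ℝ)^K ≤ (n.descFactorial K : ℝ) := by
    exact_mod_cast Nat.pow_sub_le_descFactorial n K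
  have h2 : (n.descFactorial K : ℝ) = (K.factorial : ℝ) * (n.choose K : ℝ) := by
    exact_mod_cast Nat.descFactorial_eq_factorial_mul_choose n K
  have h3 : (n:ℝ)/2 ≤ ((n + 1 - K : ℕ) : ℝ) := by
    have hc : ((n + 1 - K : ℕ) : ℝ) = (n:ℝ) + 1 - (K:ℝ) := by
      rw [Nat.cast_sub (by omega : K ≤ n + 1)]; push_cast; ring
    have hcast : (2*(K:ℝ) + 2) ≤ (n:ℝ) := by exact_mod_cast hn
    rw [hc]; linarith
  have h4 : ((n:ℝ)/2)^K ≤ (((n + 1 - K : ℕ)) : ℝ)^K :=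
    pow_le_pow_left₀ (by positivity) h3 K
  have h5 : ((n:ℝ)/2)^K ≤ (K.factorial : ℝ) * (n.choose K : ℝ) :=
    h4.trans (h1.trans_eq h2)
  rw [div_pow] at h5
  have h6 : (n:ℝ)^K ≤ ((K.factorial : ℝ) * (n.choose K : ℝ)) * (2:ℝ)^K :=
    (div_le_iff₀ (by positivity)).1 h5
  rw [div_le_iff₀ (by positivity)]
  nlinarith [h6]

lemma lower_bound {r k : ℕ} (hk1 : 1 ≤ k) (A : Matrix (Fin r) (Fin r) ℂ) {ρ : ℝ} (hρ : 0 < ρ)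
    (lam : ℂ) (hlam : ‖lam‖ = ρ) (v : Fin r → ℂ)
    (hvk : ((A.mulVecLin - lam • 1) ^ k) v = 0)
    (hvk1 : ((A.mulVecLin - lam • 1) ^ (k-1)) v ≠ 0) :
    ∃ c : ℝ, 0 < c ∧ ∀ᶠ n : ℕ in atTop,
      c * (n:ℝ) ^ (k-1) * ρ ^ n ≤ ∑ i, ∑ j, ‖(A ^ n) i j‖ := by
  classical
  set L : Module.End ℂ (Fin r → ℂ) := A.mulVecLin with hL
  set B : Module.End ℂ (Fin r → ℂ) := L - lam • 1 with hB
  set K := k - 1 with hK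
  have hkK : k = K + 1 := by omega
  have hv0 : v ≠ 0 := by
    intro h
    exact hvk1 (by rw [h, map_zero])
  have hvpos : (0:ℝ) < ‖v‖ := norm_pos_iff.2 hv0
  set cs := ‖(B ^ K) v‖ with hcs
  have hcs0 : (0:ℝ) < cs := norm_pos_iff.2 hvk1
  set E := ∑ m ∈ Finset.range K, (ρ ^ m)⁻¹ * ‖(B ^ m) v‖ with hE
  have hE0 : (0:ℝ) ≤ E := Finset.sum_nonneg fun m _ => by positivity
  set c1 := (ρ ^ K)⁻¹ * cs / ((2:ℝ)^K * (K.factorial : ℝ)) with hc1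
  have hc10 : (0:ℝ) < c1 := by rw [hc1]; positivity
  -- eventual bound: rest ≤ (c1/2) n^K ρ^n
  have hEv : ∀ᶠ n : ℕ in atTop, E * (n:ℝ)^(K-1) * ρ^n ≤ c1/2 * (n:ℝ)^K * ρ^n := by
    rcases Nat.eq_zero_or_pos K with hK0 | hKpos
    · have : E = 0 := by rw [hE, hK0]; simp
      filter_upwards [eventually_ge_atTop 1] with n hn
      rw [this]
      have : (0:ℝ) ≤ c1/2 * (n:ℝ)^K * ρ^n := by positivity
      linarith
    · have harch : ∀ᶠ n : ℕ in atTop, E / (c1/2) ≤ (n:ℝ) := by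
        obtain ⟨N, hN⟩ := exists_nat_ge (E / (c1/2))
        filter_upwards [eventually_ge_atTop N] with n hn
        exact hN.trans (by exact_mod_cast hn)
      filter_upwards [harch, eventually_ge_atTop 1] with n hn hn1
      have hKK : K = (K - 1) + 1 := by omega
      have hpow : (n:ℝ)^K = (n:ℝ)^(K-1) * (n:ℝ) := by
        conv_lhs => rw [hKK]
        rw [pow_succ]
      have hE' : E ≤ c1/2 * (n:ℝ) := by
        rw [div_le_iff₀ (by positivity)] at hn
        linarith [hn]
      calc E * (n:ℝ)^(K-1) * ρ^n ≤ (c1/2 * (n:ℝ)) * (n:ℝ)^(K-1) * ρ^n := by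
            refine mul_le_mul_of_nonneg_right (mul_le_mul_of_nonneg_right hE' (by positivity))
              (by positivity)
      _ = c1/2 * (n:ℝ)^K * ρ^n := by rw [hpow]; ring
  refine ⟨c1/2/‖v‖, by positivity, ?_⟩
  filter_upwards [eventually_ge_atTop (2*K+2), eventually_ge_atTop k, eventually_ge_atTop 1, hEv]
    with n hn2K hnk hn1 hEvn
  -- expansion
  have hexp : (L ^ n) v = (∑ m ∈ Finset.range K, ((n.choose m : ℂ) * lam ^ (n - m)) • (B ^ m) v)
      + ((n.choose K : ℂ) * lam ^ (n - K)) • (B ^ K) v := by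
    rw [pow_apply_expansion L lam v k hvk hnk, hkK, Finset.sum_range_succ]
  -- norm of top term
  have htop : ‖((n.choose K : ℂ) * lam ^ (n - K)) • (B ^ K) v‖ = (n.choose K : ℝ) * ρ^(n-K) * cs := by
    rw [norm_smul, norm_mul, Complex.norm_natCast, norm_pow, hlam, hcs, mul_assoc]
  have htop_ge : c1 * (n:ℝ)^K * ρ^n ≤ ‖((n.choose K : ℂ) * lam ^ (n - K)) • (B ^ K) v‖ := by
    rw [htop]
    have hch := choose_ge_pow_real K n hn2K
    have hsub : ρ^(n-K) = ρ^n * (ρ^K)⁻¹ := pow_sub₀ ρ (ne_of_gt hρ) (by omega)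
    rw [hsub]
    have : (n:ℝ)^K / ((2:ℝ)^K * (K.factorial : ℝ)) * (ρ^n * (ρ^K)⁻¹) * cs ≤
        (n.choose K : ℝ) * (ρ^n * (ρ^K)⁻¹) * cs := by
      refine mul_le_mul_of_nonneg_right (mul_le_mul_of_nonneg_right hch (by positivity))
        (by positivity)
    refine le_trans (le_of_eq ?_) this
    rw [hc1]; field_simp
  -- norm of rest
  have hrest : ‖∑ m ∈ Finset.range K, ((n.choose m : ℂ) * lam ^ (n - m)) • (B ^ m) v‖ ≤
      E * (n:ℝ)^(K-1) * ρ^n := by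
    refine (norm_sum_le _ _).trans ?_
    have hstep : ∀ m ∈ Finset.range K,
        ‖((n.choose m : ℂ) * lam ^ (n - m)) • (B ^ m) v‖ ≤
        ((ρ ^ m)⁻¹ * ‖(B ^ m) v‖) * (n:ℝ)^(K-1) * ρ^n := by
      intro m hm
      rw [norm_smul, norm_mul, Complex.norm_natCast, norm_pow, hlam]
      have h1 : (n.choose m : ℝ) ≤ (n:ℝ)^(K-1) := by
        refine (choose_le_pow_real n m).trans ?_
        refine pow_le_pow_right₀ (by exact_mod_cast hn1) ?_
        simp only [Finset.mem_range] at hm; omega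
      have h2 : ρ^(n-m) = ρ^n * (ρ^m)⁻¹ := by
        refine pow_sub₀ ρ (ne_of_gt hρ) ?_
        simp only [Finset.mem_range] at hm; omega
      rw [h2]
      have key : (n.choose m : ℝ) * (ρ^n * (ρ^m)⁻¹) * ‖(B^m) v‖ ≤
          (n:ℝ)^(K-1) * (ρ^n * (ρ^m)⁻¹) * ‖(B^m) v‖ :=
        mul_le_mul_of_nonneg_right (mul_le_mul_of_nonneg_right h1 (by positivity))
          (norm_nonneg _)
      refine le_trans (le_of_eq (by ring)) (key.trans_eq (by ring))
    refine (Finset.sum_le_sum hstep).trans_eq ?_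
    rw [← Finset.sum_mul, ← Finset.sum_mul, hE]
  -- lower bound on ‖(L^n) v‖
  have hLn : c1/2 * (n:ℝ)^K * ρ^n ≤ ‖(L ^ n) v‖ := by
    have h1 : ‖((n.choose K : ℂ) * lam ^ (n - K)) • (B ^ K) v‖ ≤ ‖(L ^ n) v‖ +
        ‖∑ m ∈ Finset.range K, ((n.choose m : ℂ) * lam ^ (n - m)) • (B ^ m) v‖ := by
      rw [hexp]
      calc ‖((n.choose K : ℂ) * lam ^ (n - K)) • (B ^ K) v‖
          = ‖((∑ m ∈ Finset.range K, ((n.choose m : ℂ) * lam ^ (n - m)) • (B ^ m) v)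
              + ((n.choose K : ℂ) * lam ^ (n - K)) • (B ^ K) v)
            - (∑ m ∈ Finset.range K, ((n.choose m : ℂ) * lam ^ (n - m)) • (B ^ m) v)‖ := by
            rw [add_sub_cancel_left]
      _ ≤ _ := norm_sub_le _ _
    linarith [htop_ge, hrest, h1]
  -- transfer to matrix entries
  have hTv : ‖(L ^ n) v‖ ≤ (∑ i, ∑ j, ‖(A^n) i j‖) * ‖v‖ := by
    have h : (L ^ n) v = (A ^ n).mulVec v := by rw [← mulVecLin_pow, Matrix.mulVecLin_apply]
    rw [h]
    exact norm_mulVec_le _ _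
  have h2 : ‖(L^n) v‖ / ‖v‖ ≤ ∑ i, ∑ j, ‖(A^n) i j‖ := (div_le_iff₀ hvpos).2 hTv
  have h3 : c1/2/‖v‖ * (n:ℝ)^K * ρ^n ≤ ‖(L^n) v‖ / ‖v‖ := by
    have heq : c1/2/‖v‖ * (n:ℝ)^K * ρ^n = (c1/2 * (n:ℝ)^K * ρ^n) / ‖v‖ := by ring
    rw [heq]
    exact div_le_div_of_nonneg_right hLn (le_of_lt hvpos)
  exact h3.trans h2


lemma mulVecLin_sub_smul_one {r : ℕ} (A : Matrix (Fin r) (Fin r) ℂ) (μ : ℂ) :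
    (A - μ • 1).mulVecLin = (A.mulVecLin - μ • 1 : Module.End ℂ (Fin r → ℂ)) := by
  apply LinearMap.ext; intro v
  simp only [Matrix.mulVecLin_apply, Matrix.sub_mulVec, Matrix.smul_mulVec,
    Matrix.one_mulVec, LinearMap.sub_apply, LinearMap.smul_apply, Module.End.one_apply]

lemma l1_mul_le {r : ℕ} (M N : Matrix (Fin r) (Fin r) ℝ) :
    ∑ i, ∑ j, |(M * N) i j| ≤ (∑ i, ∑ j, |M i j|) * (∑ i, ∑ j, |N i j|) := by
  have h1 : ∀ i j, |(M * N) i j| ≤ ∑ l, |M i l| * |N l j| := by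
    intro i j
    rw [Matrix.mul_apply]
    refine (Finset.abs_sum_le_sum_abs _ _).trans ?_
    refine Finset.sum_le_sum fun l _ => ?_
    rw [abs_mul]
  calc ∑ i, ∑ j, |(M * N) i j| ≤ ∑ i, ∑ j, ∑ l, |M i l| * |N l j| :=
        Finset.sum_le_sum fun i _ => Finset.sum_le_sum fun j _ => h1 i j
  _ = ∑ l, ∑ i, ∑ j, |M i l| * |N l j| := by
        rw [show (∑ i, ∑ j, ∑ l, |M i l| * |N l j|) = ∑ i, ∑ l, ∑ j, |M i l| * |N l j| from
          Finset.sum_congr rfl fun i _ => Finset.sum_comm ..]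
        exact Finset.sum_comm ..
  _ = ∑ l, (∑ i, |M i l|) * (∑ j, |N l j|) := by
        refine Finset.sum_congr rfl fun l _ => ?_
        rw [Finset.sum_mul]
        refine Finset.sum_congr rfl fun i _ => ?_
        rw [Finset.mul_sum]
  _ ≤ ∑ l, (∑ i, ∑ j, |M i j|) * (∑ j, |N l j|) := by
        refine Finset.sum_le_sum fun l _ => ?_
        refine mul_le_mul_of_nonneg_right ?_ (Finset.sum_nonneg fun j _ => abs_nonneg _)
        refine Finset.sum_le_sum fun i _ => ?_
        exact Finset.single_le_sum (f := fun j => |M i j|) (fun j _ => abs_nonneg _)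
          (Finset.mem_univ l)
  _ = (∑ i, ∑ j, |M i j|) * (∑ i, ∑ j, |N i j|) := by rw [← Finset.mul_sum]

end SpecAux

/-- The spectral radius of a square real matrix: the maximal absolute value of
the roots in `ℂ` of its characteristic polynomial. -/
noncomputable def specRadM {r : ℕ} (M : Matrix (Fin r) (Fin r) ℝ) : ℝ :=
  ((((M.charpoly.map (algebraMap ℝ ℂ)).roots.map fun z => ‖z‖₊).sup : NNReal) : ℝ)

/-- For `X` invertible and `F` non-nilpotent,
`limsup_n (log ‖X·F^n‖₁ - n·log ρ(F)) / log n = k - 1`, where `k` is the maximum,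
over complex eigenvalues `λ` of `F` with `|λ| = ρ(F)`, of the least positive `j`
with `ker((F - λ·I)^j) = ker((F - λ·I)^{j+1})` (for `F` regarded as a complex
matrix). -/
theorem limsup_log_l1norm_mul_pow_div_log_eq_polynomialGrowthRate
    {r : ℕ} (hr : 1 ≤ r) (X F : Matrix (Fin r) (Fin r) ℝ)
    (hX : IsUnit X) (hF : ¬ IsNilpotent F) (k : ℕ)
    (hk : IsGreatest {j : ℕ | ∃ lam : ℂ,
        (F.charpoly.map (algebraMap ℝ ℂ)).IsRoot lam ∧ ‖lam‖ = specRadM F ∧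
        IsLeast {i : ℕ | 0 < i ∧
          LinearMap.ker
              (Matrix.mulVecLin ((F.map (algebraMap ℝ ℂ) - lam • 1) ^ i)) =
            LinearMap.ker
              (Matrix.mulVecLin ((F.map (algebraMap ℝ ℂ) - lam • 1) ^ (i + 1)))} j} k) :
    Filter.limsup
      (fun n : ℕ =>
        (Real.log (∑ i : Fin r, ∑ j : Fin r, |(X * F ^ n) i j|) -
            n * Real.log (specRadM F)) / Real.log n)
      Filter.atTop = (k : ℝ) - 1 := by
  classical
  set A : Matrix (Fin r) (Fin r) ℂ := F.map (algebraMap ℝ ℂ) with hA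
  set ρ : ℝ := specRadM F with hρdef
  have hch : A.charpoly = F.charpoly.map (algebraMap ℝ ℂ) := Matrix.charpoly_map F _
  obtain ⟨⟨lam, hlamroot, hlamnorm, hlamleast⟩, hkub⟩ := hk
  have hk1 : 1 ≤ k := hlamleast.1.1
  have hcne : F.charpoly.map (algebraMap ℝ ℂ) ≠ 0 := by
    rw [← hch]; exact (Matrix.charpoly_monic A).ne_zero
  have hroots : ∀ μ : ℂ, A.charpoly.IsRoot μ → ‖μ‖ ≤ ρ := by
    intro μ hμ
    have hmem : μ ∈ (F.charpoly.map (algebraMap ℝ ℂ)).roots :=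
      (Polynomial.mem_roots hcne).2 (by rw [← hch]; exact hμ)
    have h2 := Multiset.le_sup (Multiset.mem_map_of_mem (fun z => ‖z‖₊) hmem)
    have h3 := NNReal.coe_le_coe.2 h2
    rw [coe_nnnorm] at h3
    exact h3
  have hρ0 : (0:ℝ) ≤ ρ := by rw [hρdef, specRadM]; exact NNReal.coe_nonneg _
  have hρpos : (0:ℝ) < ρ := by
    rcases lt_or_eq_of_le hρ0 with h | h
    · exact h
    exfalso
    have hsup0 : (((F.charpoly.map (algebraMap ℝ ℂ)).roots.map fun z => ‖z‖₊).sup) = 0 := by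
      have h' := h.symm
      rw [hρdef, specRadM, NNReal.coe_eq_zero] at h'
      exact h'
    have hallzero : ∀ μ ∈ A.charpoly.roots, μ = (0:ℂ) := by
      intro μ hμ
      have hμ' : μ ∈ (F.charpoly.map (algebraMap ℝ ℂ)).roots := by rw [← hch]; exact hμ
      have h1 := Multiset.le_sup (Multiset.mem_map_of_mem (fun z => ‖z‖₊) hμ')
      rw [hsup0, le_zero_iff] at h1
      exact nnnorm_eq_zero.1 h1
    have hsplit : A.charpoly.Splits := IsAlgClosed.splits _
    have hmonic : A.charpoly.Monic := Matrix.charpoly_monic A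
    have hcard : Multiset.card A.charpoly.roots = r := by
      have h1 := hsplit.natDegree_eq_card_roots
      rw [← h1, Matrix.charpoly_natDegree_eq_dim, Fintype.card_fin]
    have hXr : A.charpoly = Polynomial.X ^ r := by
      have hprod := hsplit.eq_prod_roots_of_monic hmonic
      rw [hprod]
      have hrep : A.charpoly.roots.map (fun a => Polynomial.X - Polynomial.C a) =
          Multiset.replicate r (Polynomial.X : Polynomial ℂ) := by
        refine Multiset.eq_replicate.2 ⟨by rw [Multiset.card_map, hcard], ?_⟩
        intro b hb
        obtain ⟨a, ha, rfl⟩ := Multiset.mem_map.1 hb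
        rw [hallzero a ha, map_zero, sub_zero]
      rw [hrep, Multiset.prod_replicate]
    have hA0 : A ^ r = 0 := by
      have h1 := Matrix.aeval_self_charpoly A
      rw [hXr, map_pow, Polynomial.aeval_X] at h1
      exact h1
    have hF0 : F ^ r = 0 := by
      have hmapped : (F ^ r).map (algebraMap ℝ ℂ) = 0 := by
        have h1 : (F ^ r).map (algebraMap ℝ ℂ) = A ^ r := by
          rw [hA, ← RingHom.mapMatrix_apply, ← RingHom.mapMatrix_apply, map_pow]
        rw [h1, hA0]
      ext i j
      have h2 := congrFun (congrFun hmapped i) j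
      rw [Matrix.map_apply] at h2
      have h3 : ((F ^ r) i j : ℂ) = 0 := h2
      exact_mod_cast h3
    exact hF ⟨r, hF0⟩
  -- bridge between the matrix-power kernels and endomorphism-power kernels
  have hEnd : ∀ (μ : ℂ) (i : ℕ), Matrix.mulVecLin ((A - μ • 1) ^ i) =
      ((A.mulVecLin - μ • 1 : Module.End ℂ (Fin r → ℂ)) ^ i) := by
    intro μ i
    rw [SpecAux.mulVecLin_pow, SpecAux.mulVecLin_sub_smul_one]
  have hfr : Module.finrank ℂ (Fin r → ℂ) = r := by simp
  have hSne : ∀ μ : ℂ,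
      LinearMap.ker ((A.mulVecLin - μ • 1 : Module.End ℂ (Fin r → ℂ)) ^ r) =
      LinearMap.ker ((A.mulVecLin - μ • 1 : Module.End ℂ (Fin r → ℂ)) ^ (r + 1)) := by
    intro μ
    have h1 := Module.End.ker_pow_eq_ker_pow_finrank_of_le
      (f := (A.mulVecLin - μ • 1 : Module.End ℂ (Fin r → ℂ))) (m := r) (by rw [hfr])
    have h2 := Module.End.ker_pow_eq_ker_pow_finrank_of_le
      (f := (A.mulVecLin - μ • 1 : Module.End ℂ (Fin r → ℂ))) (m := r + 1) (by rw [hfr]; omega)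
    rw [h1, h2]
  have hcirc : ∀ μ : ℂ, A.charpoly.IsRoot μ → ‖μ‖ = ρ →
      LinearMap.ker ((A.mulVecLin - μ • 1 : Module.End ℂ (Fin r → ℂ)) ^ k) =
      LinearMap.ker ((A.mulVecLin - μ • 1 : Module.End ℂ (Fin r → ℂ)) ^ (k + 1)) := by
    intro μ hμroot hμnorm
    have hSex : ∃ i : ℕ, 0 < i ∧
        LinearMap.ker (Matrix.mulVecLin ((A - μ • 1) ^ i)) =
        LinearMap.ker (Matrix.mulVecLin ((A - μ • 1) ^ (i + 1))) := by
      refine ⟨r, hr, ?_⟩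
      rw [hEnd, hEnd]
      exact hSne μ
    have hleast : IsLeast {i : ℕ | 0 < i ∧
        LinearMap.ker (Matrix.mulVecLin ((A - μ • 1) ^ i)) =
        LinearMap.ker (Matrix.mulVecLin ((A - μ • 1) ^ (i + 1)))} (Nat.find hSex) :=
      ⟨Nat.find_spec hSex, fun b hb => Nat.find_min' hSex hb⟩
    have hjk : Nat.find hSex ≤ k := by
      refine hkub ?_
      exact ⟨μ, by rw [← hch]; exact hμroot, hμnorm, hleast⟩
    have hj := (Nat.find_spec hSex).2
    rw [hEnd, hEnd] at hj
    have hconst := Module.End.ker_pow_constant hj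
    have e1 := hconst (k - Nat.find hSex)
    have e2 := hconst (k + 1 - Nat.find hSex)
    rw [show Nat.find hSex + (k - Nat.find hSex) = k by omega] at e1
    rw [show Nat.find hSex + (k + 1 - Nat.find hSex) = k + 1 by omega] at e2
    rw [← e1, ← e2]
  have hlamroot' : A.charpoly.IsRoot lam := by rw [hch]; exact hlamroot
  -- a vector witnessing the maximal Jordan block size on the spectral circle
  obtain ⟨v, hvk, hvk1⟩ : ∃ v : Fin r → ℂ,
      ((A.mulVecLin - lam • 1 : Module.End ℂ (Fin r → ℂ)) ^ k) v = 0 ∧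
      ((A.mulVecLin - lam • 1 : Module.End ℂ (Fin r → ℂ)) ^ (k - 1)) v ≠ 0 := by
    rcases eq_or_lt_of_le hk1 with hk1' | hk2
    · obtain ⟨w, hw0, hweq⟩ := (SpecAux.isRoot_charpoly_iff A lam).1 hlamroot'
      refine ⟨w, ?_, ?_⟩
      · rw [← hk1', pow_one]
        have h1 : (A.mulVecLin - lam • 1 : Module.End ℂ (Fin r → ℂ)) w
            = (A - lam • 1).mulVec w := by
          rw [← SpecAux.mulVecLin_sub_smul_one, Matrix.mulVecLin_apply]
        rw [h1, hweq]
      · rw [show k - 1 = 0 by omega, pow_zero]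
        simpa using hw0
    · have hne : LinearMap.ker (Matrix.mulVecLin ((A - lam • 1) ^ (k - 1))) ≠
          LinearMap.ker (Matrix.mulVecLin ((A - lam • 1) ^ k)) := by
        intro hE
        have h1 : k ≤ k - 1 := by
          refine hlamleast.2 ?_
          refine ⟨by omega, ?_⟩
          rw [show k - 1 + 1 = k by omega]
          exact hE
        omega
      have hlt : LinearMap.ker (Matrix.mulVecLin ((A - lam • 1) ^ (k - 1))) <
          LinearMap.ker (Matrix.mulVecLin ((A - lam • 1) ^ k)) := by
        refine lt_of_le_of_ne ?_ hne
        rw [hEnd, hEnd]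
        exact SpecAux.ker_pow_mono _ (by omega)
      obtain ⟨w, hw1, hw2⟩ := SetLike.exists_of_lt hlt
      refine ⟨w, ?_, ?_⟩
      · have := LinearMap.mem_ker.1 hw1
        rw [hEnd] at this
        exact this
      · intro hzero
        apply hw2
        rw [LinearMap.mem_ker, hEnd]
        exact hzero
  -- growth bounds for the complexified iterates
  obtain ⟨CU, hCU⟩ := SpecAux.upper_bound hk1 A hρpos hroots hcirc
  obtain ⟨cb, hcb0, hcb⟩ := SpecAux.lower_bound hk1 A hρpos lam hlamnorm v hvk hvk1

  -- relate complex entry sums to real entry sums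
  have hTT : ∀ n : ℕ, (∑ i, ∑ j, ‖(A ^ n) i j‖) = ∑ i, ∑ j, |(F ^ n) i j| := by
    intro n
    have hmap : A ^ n = (F ^ n).map (algebraMap ℝ ℂ) := by
      rw [hA, ← RingHom.mapMatrix_apply, ← RingHom.mapMatrix_apply, map_pow]
    rw [hmap]
    refine Finset.sum_congr rfl fun i _ => Finset.sum_congr rfl fun j _ => ?_
    rw [Matrix.map_apply]
    simp [Real.norm_eq_abs]
  set Y : Matrix (Fin r) (Fin r) ℝ := ↑hX.unit⁻¹ with hY
  have hYX : Y * X = 1 := by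
    rw [hY]
    have h1 := hX.unit.inv_mul
    rwa [IsUnit.unit_spec] at h1
  set NX := ∑ i, ∑ j, |X i j| with hNX
  set NY := ∑ i, ∑ j, |Y i j| with hNY
  have hNX0 : (0:ℝ) ≤ NX := Finset.sum_nonneg fun i _ => Finset.sum_nonneg fun j _ => abs_nonneg _
  have hNY0 : (0:ℝ) < NY := by
    rcases lt_or_eq_of_le
      (Finset.sum_nonneg fun i _ => Finset.sum_nonneg fun j _ => abs_nonneg _ :
        (0:ℝ) ≤ NY) with h | h
    · exact h
    exfalso
    have hz : ∀ a b : Fin r, Y a b = 0 := by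
      intro a b
      have h1 := (Finset.sum_eq_zero_iff_of_nonneg
        (fun i _ => Finset.sum_nonneg fun j _ => abs_nonneg _)).1 h.symm a (Finset.mem_univ a)
      have h2 := (Finset.sum_eq_zero_iff_of_nonneg (fun j _ => abs_nonneg _)).1 h1 b
        (Finset.mem_univ b)
      exact abs_eq_zero.1 h2
    have i0 : Fin r := ⟨0, hr⟩
    have h1 : (1 : Matrix (Fin r) (Fin r) ℝ) i0 i0 = 1 := Matrix.one_apply_eq _
    rw [← hYX, Matrix.mul_apply] at h1
    simp only [hz, zero_mul, Finset.sum_const_zero] at h1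
    exact zero_ne_one h1
  set S : ℕ → ℝ := fun n => ∑ i, ∑ j, |(X * F ^ n) i j| with hSdef
  have hupS : ∀ n : ℕ, S n ≤ NX * (∑ i, ∑ j, ‖(A ^ n) i j‖) := by
    intro n
    rw [hTT n]
    exact SpecAux.l1_mul_le X (F ^ n)
  have hloS : ∀ n : ℕ, (∑ i, ∑ j, ‖(A ^ n) i j‖) ≤ NY * S n := by
    intro n
    rw [hTT n]
    have h1 : F ^ n = Y * (X * F ^ n) := by rw [← mul_assoc, hYX, one_mul]
    calc ∑ i, ∑ j, |(F ^ n) i j| = ∑ i, ∑ j, |(Y * (X * F ^ n)) i j| := by rw [← h1]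
    _ ≤ NY * S n := SpecAux.l1_mul_le Y (X * F ^ n)
  set cS := cb / NY with hcS
  have hcS0 : 0 < cS := div_pos hcb0 hNY0
  set CS := max (NX * CU) cS with hCS
  have hCS0 : 0 < CS := lt_of_lt_of_le hcS0 (le_max_right _ _)
  clear_value cS CS
  have hbounds : ∀ᶠ n : ℕ in atTop,
      cS * (n:ℝ)^(k-1) * ρ^n ≤ S n ∧ S n ≤ CS * (n:ℝ)^(k-1) * ρ^n := by
    filter_upwards [hCU, hcb, eventually_ge_atTop 1] with n h1 h2 hn1
    have hn0 : (0:ℝ) < (n:ℝ) := by exact_mod_cast hn1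
    constructor
    · have h3 : cb * (n:ℝ)^(k-1) * ρ^n ≤ NY * S n := h2.trans (hloS n)
      rw [hcS, div_mul_eq_mul_div, div_mul_eq_mul_div, div_le_iff₀ hNY0]
      linarith [h3]
    · refine (hupS n).trans ?_
      have h4 : NX * (∑ i, ∑ j, ‖(A ^ n) i j‖) ≤ NX * (CU * (n:ℝ)^(k-1) * ρ^n) :=
        mul_le_mul_of_nonneg_left h1 hNX0
      refine h4.trans ?_
      have h5 : NX * (CU * (n:ℝ)^(k-1) * ρ^n) = (NX * CU) * (n:ℝ)^(k-1) * ρ^n := by ring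
      rw [h5]
      have hle : NX * CU ≤ CS := by rw [hCS]; exact le_max_left _ _
      exact mul_le_mul_of_nonneg_right
        (mul_le_mul_of_nonneg_right hle (by positivity)) (by positivity)
  have hkR : ((k - 1 : ℕ) : ℝ) = (k:ℝ) - 1 := by
    rw [Nat.cast_sub hk1]; norm_num
  have hlogtend : Filter.Tendsto (fun n : ℕ => Real.log n) atTop atTop :=
    Real.tendsto_log_atTop.comp tendsto_natCast_atTop_atTop
  have hlow : Filter.Tendsto (fun n : ℕ => ((k:ℝ) - 1) + Real.log cS / Real.log n) atTop
      (nhds ((k:ℝ) - 1)) := by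
    have h2 := Filter.Tendsto.div_atTop (tendsto_const_nhds (x := Real.log cS)) hlogtend
    simpa using (tendsto_const_nhds (x := (k:ℝ) - 1)).add h2
  have hup : Filter.Tendsto (fun n : ℕ => ((k:ℝ) - 1) + Real.log CS / Real.log n) atTop
      (nhds ((k:ℝ) - 1)) := by
    have h2 := Filter.Tendsto.div_atTop (tendsto_const_nhds (x := Real.log CS)) hlogtend
    simpa using (tendsto_const_nhds (x := (k:ℝ) - 1)).add h2
  have hlim : Filter.Tendsto
      (fun n : ℕ => (Real.log (S n) - n * Real.log ρ) / Real.log n) atTop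
      (nhds ((k:ℝ) - 1)) := by
    refine tendsto_of_tendsto_of_tendsto_of_le_of_le' hlow hup ?_ ?_
    · filter_upwards [hbounds, eventually_ge_atTop 2] with n hb hn2
      have hlogn : 0 < Real.log n := Real.log_pos (by exact_mod_cast hn2)
      have hn0 : (0:ℝ) < (n:ℝ) := by
        have : (2:ℝ) ≤ (n:ℝ) := by exact_mod_cast hn2
        linarith
      have hSpos : 0 < S n := lt_of_lt_of_le (by positivity) hb.1
      have hlog1 : Real.log (cS * (n:ℝ)^(k-1) * ρ^n) ≤ Real.log (S n) :=
        Real.log_le_log (by positivity) hb.1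
      rw [Real.log_mul (by positivity) (by positivity),
        Real.log_mul (by positivity) (by positivity), Real.log_pow, Real.log_pow] at hlog1
      rw [le_div_iff₀ hlogn]
      have heq : ((k:ℝ) - 1 + Real.log cS / Real.log n) * Real.log n =
          ((k:ℝ) - 1) * Real.log n + Real.log cS := by
        field_simp
      rw [heq]
      have hcast : ((k - 1 : ℕ):ℝ) * Real.log n = ((k:ℝ) - 1) * Real.log n := by rw [hkR]
      linarith [hlog1]
    · filter_upwards [hbounds, eventually_ge_atTop 2] with n hb hn2
      have hlogn : 0 < Real.log n := Real.log_pos (by exact_mod_cast hn2)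
      have hn0 : (0:ℝ) < (n:ℝ) := by
        have : (2:ℝ) ≤ (n:ℝ) := by exact_mod_cast hn2
        linarith
      have hSpos : 0 < S n := lt_of_lt_of_le (by positivity) hb.1
      have hlog1 : Real.log (S n) ≤ Real.log (CS * (n:ℝ)^(k-1) * ρ^n) :=
        Real.log_le_log hSpos hb.2
      rw [Real.log_mul (by positivity) (by positivity),
        Real.log_mul (by positivity) (by positivity), Real.log_pow, Real.log_pow] at hlog1
      rw [div_le_iff₀ hlogn]
      have heq : ((k:ℝ) - 1 + Real.log CS / Real.log n) * Real.log n =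
          ((k:ℝ) - 1) * Real.log n + Real.log CS := by
        field_simp
      rw [heq]
      have hcast : ((k - 1 : ℕ):ℝ) * Real.log n = ((k:ℝ) - 1) * Real.log n := by rw [hkR]
      linarith [hlog1]
  exact hlim.limsup_eq
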